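/- For 2 voters and 3 alternatives, there are exactly 2 social welfare functions satisfying both unanimity and independence of irrelevant alternatives, and both are dictatorial (the two projection functions). -/

import Mathlib

/-- A strict linear order on the 3-element set `Fin 3`, encoded as a boolean-valued
relation (`r a b = true` meaning `a` is ranked above `b`). -/
abbrev LO3 := {r : Fin 3 → Fin 3 → Bool // IsStrictTotalOrder (Fin 3) (fun a b => r a b = true)}

lemma LO3.mk_sto (r : Fin 3 → Fin 3 → Bool)
    (h₁ : ∀ a b, r a b = true ∨ a = b ∨ r b a = true)
    (h₂ : ∀ a, ¬ r a a = true)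
    (h₃ : ∀ a b c, r a b = true → r b c = true → r a c = true) :
    IsStrictTotalOrder (Fin 3) (fun a b => r a b = true) := by
  haveI : IsTrichotomous (Fin 3) (fun a b => r a b = true) :=
    ⟨fun a b hab hba => (h₁ a b).elim (fun h => absurd h hab) (fun h => h.elim id (fun h => absurd h hba))⟩
  haveI : IsIrrefl (Fin 3) (fun a b => r a b = true) := ⟨h₂⟩
  haveI : IsTrans (Fin 3) (fun a b => r a b = true) := ⟨h₃⟩
  haveI : IsStrictOrder (Fin 3) (fun a b => r a b = true) := ⟨⟩
  exact ⟨⟩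

/-- The reverse (inverse) of a strict linear order. -/
def LO3.rev (r : LO3) : LO3 :=
  ⟨fun a b => r.val b a, by
    haveI := r.prop
    exact @IsStrictTotalOrder.swap (Fin 3) (fun a b => r.val a b = true) _⟩

/-- Kendall tau distance: the number of (unordered) pairs on which two orders disagree. -/
def kendall (r s : LO3) : ℕ :=
  (Finset.univ.filter
    (fun p : Fin 3 × Fin 3 => p.1 < p.2 ∧ r.val p.1 p.2 ≠ s.val p.1 p.2)).card

/-- Independence of irrelevant alternatives for a two-voter SWF on `Fin 3`. -/
def IIA2 (W : (Fin 2 → LO3) → LO3) : Prop :=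
  ∀ π π' : Fin 2 → LO3, ∀ a b : Fin 3,
    (∀ v, (π v).val a b = (π' v).val a b) → (W π).val a b = (W π').val a b

/-- Unanimity for a two-voter SWF on `Fin 3`. -/
def Unanimity2 (W : (Fin 2 → LO3) → LO3) : Prop :=
  ∀ π : Fin 2 → LO3, ∀ a b : Fin 3, (∀ v, (π v).val a b = true) → (W π).val a b = true

def Dictatorial (W : (Fin 2 → LO3) → LO3) : Prop := ∃ d, ∀ π, W π = π d

def InverselyDictatorial (W : (Fin 2 → LO3) → LO3) : Prop := ∃ d, ∀ π, W π = (π d).rev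

/-! ### Auxiliary material -/

lemma LO3.diag (r : LO3) (a : Fin 3) : r.val a a = false := by
  haveI := r.prop
  have h := (irrefl_of (fun a b => r.val a b = true) a)
  simpa using h

lemma LO3.not_both (r : LO3) {a b : Fin 3} (h1 : r.val a b = true) (h2 : r.val b a = true) :
    False := by
  haveI := r.prop
  have h3 := trans_of (fun a b => r.val a b = true) h1 h2
  simp [r.diag a] at h3

lemma LO3.asym (r : LO3) {a b : Fin 3} (h : a ≠ b) : r.val a b = !r.val b a := by
  haveI := r.prop
  rcases trichotomous_of (fun a b => r.val a b = true) a b with h1 | h1 | h1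
  · have : r.val b a = false := by
      cases hba : r.val b a
      · rfl
      · exact absurd (r.not_both h1 hba) (by simp)
    simp [h1, this]
  · exact absurd h1 h
  · have : r.val a b = false := by
      cases hab : r.val a b
      · rfl
      · exact absurd (r.not_both hab h1) (by simp)
    simp [h1, this]

lemma LO3.trans' (r : LO3) {a b c : Fin 3} (h1 : r.val a b = true) (h2 : r.val b c = true) :
    r.val a c = true := by
  haveI := r.prop
  exact trans_of (fun a b => r.val a b = true) h1 h2

/-- ranking function for the order `x > y > (third)` -/
def rnk (x y : Fin 3) (w : Fin 3) : Fin 3 := if w = x then 2 else if w = y then 1 else 0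

def mkLO (x y : Fin 3) (h : x ≠ y) : LO3 :=
  ⟨fun a b => decide (rnk x y b < rnk x y a), by
    apply LO3.mk_sto
    · revert h; revert x y; decide
    · revert h; revert x y; decide
    · revert h; revert x y; decide⟩

lemma mkLO_val (x y : Fin 3) (h : x ≠ y) (a b : Fin 3) :
    (mkLO x y h).val a b = decide (rnk x y b < rnk x y a) := rfl

-- value facts about mkLO, all by decide
lemma mk_xy : ∀ x y : Fin 3, x ≠ y → ∀ a b : Fin 3, a = x → b = y →
    decide (rnk x y b < rnk x y a) = true := by decide
lemma mk_yx : ∀ x y : Fin 3, x ≠ y → ∀ a b : Fin 3, a = y → b = x →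
    decide (rnk x y b < rnk x y a) = false := by decide
lemma mk_yz : ∀ x y : Fin 3, x ≠ y → ∀ a b : Fin 3, a = y → b ≠ x → b ≠ y →
    decide (rnk x y b < rnk x y a) = true := by decide
lemma mk_zy : ∀ x y : Fin 3, x ≠ y → ∀ a b : Fin 3, a ≠ x → a ≠ y → b = y →
    decide (rnk x y b < rnk x y a) = false := by decide
lemma mk_xz : ∀ x y : Fin 3, x ≠ y → ∀ a b : Fin 3, a = x → b ≠ x → b ≠ y →
    decide (rnk x y b < rnk x y a) = true := by decide
lemma mk_zx : ∀ x y : Fin 3, x ≠ y → ∀ a b : Fin 3, a ≠ x → a ≠ y → b = x →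
    decide (rnk x y b < rnk x y a) = false := by decide

set_option maxRecDepth 100000 in
set_option maxHeartbeats 1000000 in
set_option synthInstance.maxHeartbeats 1000000 in
set_option synthInstance.maxSize 1000 in
lemma reach : ∀ f : Fin 3 → Fin 3 → Bool,
  (∀ a b d : Fin 3, a≠b → a≠d → b≠d → f a b = true → f a d = true) →
  (∀ a b d : Fin 3, a≠b → a≠d → b≠d → f a b = true → f d b = true) →
  ∀ a b x y : Fin 3, a≠b → x≠y → f a b = true → f x y = true := by decide

section Main

variable (W : (Fin 2 → LO3) → LO3)

/-- In the canonical totally-disagreeing profile on the pair `(a,b)`,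
does voter 0 win (socially `a` above `b`)? -/
def Dec (a b : Fin 3) (h : a ≠ b) : Bool :=
  (W ![mkLO a b h, mkLO b a h.symm]).val a b

variable (hU : Unanimity2 W) (hE : IIA2 W)

lemma fin2_forall {P : Fin 2 → Prop} (h0 : P 0) (h1 : P 1) : ∀ v : Fin 2, P v := by
  intro v; fin_cases v <;> assumption

include hE in
/-- If the two voters disagree on `(a,b)` with voter 0 putting `a` above `b`, then the
social outcome on `(a,b)` is `Dec a b`. -/
lemma dec_spec (π : Fin 2 → LO3) (a b : Fin 3) (h : a ≠ b)
    (h0 : (π 0).val a b = true) (h1 : (π 1).val a b = false) :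
    (W π).val a b = Dec W a b h := by
  apply hE
  apply fin2_forall
  · rw [h0, show (![mkLO a b h, mkLO b a h.symm] : Fin 2 → LO3) 0 = mkLO a b h from rfl,
      mkLO_val, mk_xy a b h a b rfl rfl]
  · rw [h1, show (![mkLO a b h, mkLO b a h.symm] : Fin 2 → LO3) 1 = mkLO b a h.symm from rfl,
      mkLO_val, mk_yx b a h.symm a b rfl rfl]

include hU hE in
lemma decL1 : ∀ a b d : Fin 3, (hab : a ≠ b) → (had : a ≠ d) → (hbd : b ≠ d) →
    Dec W a b hab = true → Dec W a d had = true := by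
  intro a b d hab had hbd h
  -- voter 0 : a > b > d,  voter 1 : b > d > a
  set π : Fin 2 → LO3 := ![mkLO a b hab, mkLO b d hbd] with hπ
  have e0 : π 0 = mkLO a b hab := rfl
  have e1 : π 1 = mkLO b d hbd := rfl
  have sab : (W π).val a b = true := by
    rw [dec_spec W hE π a b hab]
    · exact h
    · rw [e0, mkLO_val, mk_xy a b hab a b rfl rfl]
    · rw [e1, mkLO_val, mk_zx b d hbd a b hab had rfl]
  have sbd : (W π).val b d = true := by
    apply hU
    apply fin2_forall
    · rw [e0, mkLO_val, mk_yz a b hab b d rfl (Ne.symm had) (Ne.symm hbd)]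
    · rw [e1, mkLO_val, mk_xy b d hbd b d rfl rfl]
  have sad : (W π).val a d = true := (W π).trans' sab sbd
  rw [← dec_spec W hE π ]
  · exact sad
  · rw [e0, mkLO_val, mk_xz a b hab a d rfl (Ne.symm had) (Ne.symm hbd)]
  · rw [e1, mkLO_val, mk_zy b d hbd a d hab had rfl]

include hU hE in
lemma decL2 : ∀ a b d : Fin 3, (hab : a ≠ b) → (had : a ≠ d) → (hbd : b ≠ d) →
    Dec W a b hab = true → Dec W d b (hbd.symm) = true := by
  intro a b d hab had hbd h
  -- voter 0 : d > a > b,  voter 1 : b > d > a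
  set π : Fin 2 → LO3 := ![mkLO d a had.symm, mkLO b d hbd] with hπ
  have e0 : π 0 = mkLO d a had.symm := rfl
  have e1 : π 1 = mkLO b d hbd := rfl
  have sab : (W π).val a b = true := by
    rw [dec_spec W hE π a b hab]
    · exact h
    · rw [e0, mkLO_val, mk_yz d a had.symm a b rfl hbd hab.symm]
    · rw [e1, mkLO_val, mk_zx b d hbd a b hab had rfl]
  have sda : (W π).val d a = true := by
    apply hU
    apply fin2_forall
    · rw [e0, mkLO_val, mk_xy d a had.symm d a rfl rfl]
    · rw [e1, mkLO_val, mk_yz b d hbd d a rfl hab had]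
  have sdb : (W π).val d b = true := (W π).trans' sda sab
  rw [← dec_spec W hE π]
  · exact sdb
  · rw [e0, mkLO_val, mk_xz d a had.symm d b rfl hbd hab.symm]
  · rw [e1, mkLO_val, mk_yx b d hbd d b rfl rfl]

/-- A total (default-valued) version of `Dec`, to feed `reach`. -/
def Dec' (a b : Fin 3) : Bool := if h : a ≠ b then Dec W a b h else false

include hU hE in
lemma dec_all {a₀ b₀ : Fin 3} (h₀ : a₀ ≠ b₀) (hd : Dec W a₀ b₀ h₀ = true) :
    ∀ a b : Fin 3, (h : a ≠ b) → Dec W a b h = true := by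
  intro a b h
  have key := reach (Dec' W) ?_ ?_ a₀ b₀ a b h₀ h ?_
  · rw [Dec', dif_pos h] at key; exact key
  · intro a b d hab had hbd hf
    rw [Dec', dif_pos hab] at hf
    rw [Dec', dif_pos had]
    exact decL1 W hU hE a b d hab had hbd hf
  · intro a b d hab had hbd hf
    rw [Dec', dif_pos hab] at hf
    rw [Dec', dif_pos hbd.symm]
    exact decL2 W hU hE a b d hab had hbd hf
  · rw [Dec', dif_pos h₀]; exact hd

include hU hE in
lemma proj0_of_dec_all (hall : ∀ a b : Fin 3, (h : a ≠ b) → Dec W a b h = true) :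
    ∀ π, W π = π 0 := by
  intro π
  apply Subtype.ext
  funext a b
  by_cases h : a = b
  · subst h; rw [(W π).diag, (π 0).diag]
  · cases h0 : (π 0).val a b
    · -- voter 0 has b above a
      have h0' : (π 0).val b a = true := by
        have := (π 0).asym (Ne.symm h); rw [h0] at this; simpa using this
      cases h1 : (π 1).val a b
      · -- both have b above a : by unanimity socially b above a
        have h1' : (π 1).val b a = true := by
          have := (π 1).asym (Ne.symm h); rw [h1] at this; simpa using this
        have hw : (W π).val b a = true := by
          apply hU; apply fin2_forall <;> assumption
        have h2 := (W π).asym h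
        rw [hw] at h2; simpa using h2
      · -- disagreement with voter 0 putting b above a
        have h1' : (π 1).val b a = false := by
          have := (π 1).asym (Ne.symm h); rw [h1] at this; simpa using this
        have : (W π).val b a = true := by
          rw [dec_spec W hE π b a (Ne.symm h) h0' h1']
          exact hall b a (Ne.symm h)
        have h2 := (W π).asym h
        rw [this] at h2; simpa using h2
    · cases h1 : (π 1).val a b
      · -- disagreement with voter 0 putting a above b
        rw [dec_spec W hE π a b h h0 h1]
        exact hall a b h
      · apply hU; apply fin2_forall <;> assumption

end Main

/-- Swap the two voters. -/
def Wsw (W : (Fin 2 → LO3) → LO3) : (Fin 2 → LO3) → LO3 := fun π => W ![π 1, π 0]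

lemma Wsw_unan {W} (hU : Unanimity2 W) : Unanimity2 (Wsw W) := by
  intro π a b hv
  apply hU
  apply fin2_forall <;> simp [hv 0, hv 1]

lemma Wsw_iia {W} (hE : IIA2 W) : IIA2 (Wsw W) := by
  intro π π' a b hv
  apply hE
  apply fin2_forall <;> simp [hv 0, hv 1]

lemma main_dichotomy (W : (Fin 2 → LO3) → LO3) (hU : Unanimity2 W) (hE : IIA2 W) :
    W = (fun π => π 0) ∨ W = (fun π => π 1) := by
  have h01 : (0 : Fin 3) ≠ 1 := by decide
  cases hd : Dec W 0 1 h01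
  · -- voter 1 wins on (0,1) : Wsw has Dec (1,0) true
    right
    have hd' : Dec (Wsw W) 1 0 h01.symm = true := by
      have e : (W ![mkLO 0 1 h01, mkLO 1 0 h01.symm]).val 1 0 = true := by
        have h3 := (W ![mkLO 0 1 h01, mkLO 1 0 h01.symm]).asym h01
        rw [show (W ![mkLO 0 1 h01, mkLO 1 0 h01.symm]).val 0 1 = Dec W 0 1 h01 from rfl,
          hd] at h3
        simpa using h3
      rw [Dec, Wsw]
      have eπ : ![(![mkLO 1 0 h01.symm, mkLO 0 1 h01] : Fin 2 → LO3) 1,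
          (![mkLO 1 0 h01.symm, mkLO 0 1 h01] : Fin 2 → LO3) 0]
          = ![mkLO 0 1 h01, mkLO 1 0 h01.symm] := by
        funext v; fin_cases v <;> rfl
      rw [eπ]
      exact e
    have hall := dec_all (Wsw W) (Wsw_unan hU) (Wsw_iia hE) h01.symm hd'
    have hproj := proj0_of_dec_all (Wsw W) (Wsw_unan hU) (Wsw_iia hE) hall
    funext π
    have := hproj ![π 1, π 0]
    rw [Wsw] at this
    have eπ : ![(![π 1, π 0] : Fin 2 → LO3) 1, (![π 1, π 0] : Fin 2 → LO3) 0] = π := by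
      funext v; fin_cases v <;> rfl
    rw [eπ] at this
    simpa using this
  · left
    have hall := dec_all W hU hE h01 hd
    have hproj := proj0_of_dec_all W hU hE hall
    funext π
    exact hproj π

lemma proj_mem : Unanimity2 (fun π : Fin 2 → LO3 => π 0) ∧ IIA2 (fun π : Fin 2 → LO3 => π 0) ∧
    Unanimity2 (fun π : Fin 2 → LO3 => π 1) ∧ IIA2 (fun π : Fin 2 → LO3 => π 1) := by
  refine ⟨?_, ?_, ?_, ?_⟩
  · intro π a b hv; exact hv 0
  · intro π π' a b hv; exact hv 0
  · intro π a b hv; exact hv 1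
  · intro π π' a b hv; exact hv 1

lemma proj_ne : (fun π : Fin 2 → LO3 => π 0) ≠ (fun π : Fin 2 → LO3 => π 1) := by
  intro hcon
  have h01 : (0 : Fin 3) ≠ 1 := by decide
  have := congrFun hcon ![mkLO 0 1 h01, mkLO 1 0 h01.symm]
  have h2 := congrFun (congrFun (congrArg Subtype.val this) 0) 1
  rw [show ((![mkLO 0 1 h01, mkLO 1 0 h01.symm] : Fin 2 → LO3) 0) = mkLO 0 1 h01 from rfl,
    show ((![mkLO 0 1 h01, mkLO 1 0 h01.symm] : Fin 2 → LO3) 1) = mkLO 1 0 h01.symm from rfl]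
      at h2
  rw [mkLO_val, mkLO_val] at h2
  revert h2
  decide

/-- For 2 voters and 3 alternatives, there are exactly 2 social welfare functions
satisfying both unanimity and independence of irrelevant alternatives, and both are
dictatorial: they are the two projection functions. -/
theorem arrow_base_case_exactly_two_swf :
    {W : (Fin 2 → LO3) → LO3 | Unanimity2 W ∧ IIA2 W} =
      {fun π => π 0, fun π => π 1} ∧
    {W : (Fin 2 → LO3) → LO3 | Unanimity2 W ∧ IIA2 W}.ncard = 2 ∧
    (∀ W ∈ {W : (Fin 2 → LO3) → LO3 | Unanimity2 W ∧ IIA2 W}, Dictatorial W) := by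
  obtain ⟨u0, i0, u1, i1⟩ := proj_mem
  have hset : {W : (Fin 2 → LO3) → LO3 | Unanimity2 W ∧ IIA2 W} =
      {fun π => π 0, fun π => π 1} := by
    ext W
    constructor
    · rintro ⟨hU, hE⟩
      exact main_dichotomy W hU hE
    · rintro (rfl | rfl)
      · exact ⟨u0, i0⟩
      · exact ⟨u1, i1⟩
  refine ⟨hset, ?_, ?_⟩
  · rw [hset]
    exact Set.ncard_pair proj_ne
  · intro W hW
    rw [hset] at hW
    rcases hW with rfl | rfl
    · exact ⟨0, fun π => rfl⟩
    · exact ⟨1, fun π => rfl⟩
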